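/- arXiv:quant-ph/0305035 — 2 statements merged into one kernel-verified Lean document; each statement's English description precedes it below -/
import Mathlib

section
/- Linear programming dual formulation of the constrained Holevo capacity: for every quantum channel N and every positive definite density matrix ρ on its input space, there exists a Hermitian matrix τ on the input space such that ⟨v|τ|v⟩ ≤ H(N(|v⟩⟨v|)) for every unit vector v in the input space, and χ_N(ρ) = H(N(ρ)) − Tr(τρ). -/
open scoped Kronecker Matrix ComplexOrder

noncomputable section

/-- The von Neumann entropy `H(ρ) = -∑ᵢ λᵢ log λᵢ` of a Hermitian matrix,
where the `λᵢ` are its eigenvalues (with the convention `0 log 0 = 0`,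
which holds automatically since `Real.log 0 = 0`). -/
def vNEntropy {n : Type} [Fintype n] [DecidableEq n] (ρ : Matrix n n ℂ) : ℝ :=
  if h : ρ.IsHermitian then -∑ i, h.eigenvalues i * Real.log (h.eigenvalues i) else 0

/-- A density matrix: positive semidefinite with trace 1. -/
def IsDensityMatrix {n : Type} [Fintype n] [DecidableEq n] (ρ : Matrix n n ℂ) : Prop :=
  ρ.PosSemidef ∧ ρ.trace = 1

/-- The rank-one matrix `|v⟩⟨v|`. -/
def outer {n : Type} [Fintype n] (v : n → ℂ) : Matrix n n ℂ :=
  Matrix.vecMulVec v (star v)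

/-- A unit vector. -/
def IsUnitVec {n : Type} [Fintype n] (v : n → ℂ) : Prop :=
  ∑ a, ‖v a‖ ^ 2 = 1

/-- A quantum channel, given by a finite family of Kraus operators `A k`
satisfying the completeness relation `∑ k, (A k)ᴴ * A k = 1`. -/
structure QChannel (I O : Type) [Fintype I] [DecidableEq I] [Fintype O] [DecidableEq O] :
    Type 1 where
  ι : Type
  [instFintype : Fintype ι]
  A : ι → Matrix O I ℂ
  complete : ∑ k, (A k)ᴴ * A k = 1

attribute [instance] QChannel.instFintype

/-- The action `N(ρ) = ∑ₖ Aₖ ρ Aₖᴴ` of a channel on a matrix. -/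
def QChannel.app {I O : Type} [Fintype I] [DecidableEq I] [Fintype O] [DecidableEq O]
    (N : QChannel I O) (ρ : Matrix I I ℂ) : Matrix O O ℂ :=
  ∑ k, N.A k * ρ * (N.A k)ᴴ

theorem kronecker_conjT {l m n p : Type} (A : Matrix l m ℂ) (B : Matrix n p ℂ) :
    (A ⊗ₖ B)ᴴ = Aᴴ ⊗ₖ Bᴴ := by
  ext ⟨i, j⟩ ⟨k, s⟩
  simp [Matrix.conjTranspose_apply, mul_comm]

theorem sum_kronecker_sum {ι₁ ι₂ l m n p : Type} [Fintype ι₁] [Fintype ι₂]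
    (A : ι₁ → Matrix l m ℂ) (B : ι₂ → Matrix n p ℂ) :
    (∑ i, A i) ⊗ₖ (∑ j, B j) = ∑ k : ι₁ × ι₂, A k.1 ⊗ₖ B k.2 := by
  ext ⟨x, y⟩ ⟨x', y'⟩
  simp only [Matrix.sum_apply, Matrix.kroneckerMap_apply, Finset.sum_mul_sum]
  exact (Fintype.sum_prod_type (fun k : ι₁ × ι₂ => A k.1 x x' * B k.2 y y')).symm

/-- The tensor-product channel `N₁ ⊗ N₂`: its Kraus operators are the Kronecker
products of the Kraus operators of the two factors. -/
def QChannel.prod {I₁ O₁ I₂ O₂ : Type}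
    [Fintype I₁] [DecidableEq I₁] [Fintype O₁] [DecidableEq O₁]
    [Fintype I₂] [DecidableEq I₂] [Fintype O₂] [DecidableEq O₂]
    (N₁ : QChannel I₁ O₁) (N₂ : QChannel I₂ O₂) : QChannel (I₁ × I₂) (O₁ × O₂) where
  ι := N₁.ι × N₂.ι
  A := fun k => N₁.A k.1 ⊗ₖ N₂.A k.2
  complete := by
    have h1 : ∀ k : N₁.ι × N₂.ι, (N₁.A k.1 ⊗ₖ N₂.A k.2)ᴴ * (N₁.A k.1 ⊗ₖ N₂.A k.2)
        = ((N₁.A k.1)ᴴ * N₁.A k.1) ⊗ₖ ((N₂.A k.2)ᴴ * N₂.A k.2) := fun k => by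
      rw [kronecker_conjT, Matrix.mul_kronecker_mul]
    rw [Finset.sum_congr rfl fun k _ => h1 k,
      ← sum_kronecker_sum (fun k₁ => (N₁.A k₁)ᴴ * N₁.A k₁) (fun k₂ => (N₂.A k₂)ᴴ * N₂.A k₂),
      N₁.complete, N₂.complete, Matrix.one_kronecker_one]

/-- The minimum output entropy of a channel: the minimum of `H(N(|v⟩⟨v|))`
over unit vectors `v` in the input space. -/
def minOutEntropy {I O : Type} [Fintype I] [DecidableEq I] [Fintype O] [DecidableEq O]
    (N : QChannel I O) : ℝ :=
  sInf { x | ∃ v : I → ℂ, IsUnitVec v ∧ x = vNEntropy (N.app (outer v)) }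

/-- The Holevo capacity `χ_N` of a channel. -/
def holevoCap {I O : Type} [Fintype I] [DecidableEq I] [Fintype O] [DecidableEq O]
    (N : QChannel I O) : ℝ :=
  sSup { x | ∃ (n : ℕ) (p : Fin n → ℝ) (v : Fin n → I → ℂ),
    (∀ i, 0 ≤ p i) ∧ (∑ i, p i = 1) ∧ (∀ i, IsUnitVec (v i)) ∧
    x = vNEntropy (N.app (∑ i, (p i : ℂ) • outer (v i))) -
      ∑ i, p i * vNEntropy (N.app (outer (v i))) }

/-- The constrained Holevo capacity `χ_N(ρ)`: only ensembles averaging to `ρ` are allowed. -/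
def cHolevoCap {I O : Type} [Fintype I] [DecidableEq I] [Fintype O] [DecidableEq O]
    (N : QChannel I O) (ρ : Matrix I I ℂ) : ℝ :=
  sSup { x | ∃ (n : ℕ) (p : Fin n → ℝ) (v : Fin n → I → ℂ),
    (∀ i, 0 ≤ p i) ∧ (∑ i, p i = 1) ∧ (∀ i, IsUnitVec (v i)) ∧
    (∑ i, (p i : ℂ) • outer (v i)) = ρ ∧
    x = vNEntropy (N.app ρ) - ∑ i, p i * vNEntropy (N.app (outer (v i))) }

/-- Partial trace over the second (B) factor of a bipartite matrix. -/
def traceB {A B : Type} [Fintype B] (σ : Matrix (A × B) (A × B) ℂ) : Matrix A A ℂ :=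
  Matrix.of fun a a' => ∑ b, σ (a, b) (a', b)

/-- The entanglement of formation of a bipartite state on `A ⊗ B`. -/
def entF {A B : Type} [Fintype A] [DecidableEq A] [Fintype B] [DecidableEq B]
    (σ : Matrix (A × B) (A × B) ℂ) : ℝ :=
  sInf { x | ∃ (n : ℕ) (p : Fin n → ℝ) (v : Fin n → A × B → ℂ),
    (∀ i, 0 ≤ p i) ∧ (∀ i, IsUnitVec (v i)) ∧
    (∑ i, (p i : ℂ) • outer (v i)) = σ ∧
    x = ∑ i, p i * vNEntropy (traceB (outer (v i))) }

/-- The tensor product of two bipartite states `σ₁` on `A₁ ⊗ B₁` and `σ₂` on `A₂ ⊗ B₂`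
(Kronecker product), reindexed as a bipartite state with A-part `A₁ ⊗ A₂` and
B-part `B₁ ⊗ B₂`. -/
def pairTensor {A₁ B₁ A₂ B₂ : Type}
    (σ₁ : Matrix (A₁ × B₁) (A₁ × B₁) ℂ) (σ₂ : Matrix (A₂ × B₂) (A₂ × B₂) ℂ) :
    Matrix ((A₁ × A₂) × (B₁ × B₂)) ((A₁ × A₂) × (B₁ × B₂)) ℂ :=
  Matrix.of fun x y =>
    σ₁ (x.1.1, x.2.1) (y.1.1, y.2.1) * σ₂ (x.1.2, x.2.2) (y.1.2, y.2.2)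

/-- Trace out the second subsystem (`A₂` and `B₂`) of a quadripartite state. -/
def trace2 {A₁ A₂ B₁ B₂ : Type} [Fintype A₂] [Fintype B₂]
    (σ : Matrix ((A₁ × A₂) × (B₁ × B₂)) ((A₁ × A₂) × (B₁ × B₂)) ℂ) :
    Matrix (A₁ × B₁) (A₁ × B₁) ℂ :=
  Matrix.of fun x y => ∑ a₂, ∑ b₂, σ ((x.1, a₂), (x.2, b₂)) ((y.1, a₂), (y.2, b₂))

/-- Trace out the first subsystem (`A₁` and `B₁`) of a quadripartite state. -/
def trace1 {A₁ A₂ B₁ B₂ : Type} [Fintype A₁] [Fintype B₁]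
    (σ : Matrix ((A₁ × A₂) × (B₁ × B₂)) ((A₁ × A₂) × (B₁ × B₂)) ℂ) :
    Matrix (A₂ × B₂) (A₂ × B₂) ℂ :=
  Matrix.of fun x y => ∑ a₁, ∑ b₁, σ ((a₁, x.1), (b₁, x.2)) ((a₁, y.1), (b₁, y.2))


/-! ### Auxiliary development for the LP duality theorem -/

namespace CHLP

open Matrix Complex

lemma dot_star_self {n : Type} [Fintype n] (x : n → ℂ) :
    dotProduct (star x) x = ((∑ i, ‖x i‖ ^ 2 : ℝ) : ℂ) := by
  simp only [dotProduct, Pi.star_apply, Complex.ofReal_sum]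
  refine Finset.sum_congr rfl fun i _ => ?_
  rw [Complex.star_def, mul_comm, Complex.mul_conj, Complex.normSq_eq_norm_sq]

lemma trace_outer_eq_one {n : Type} [Fintype n] {v : n → ℂ} (hv : IsUnitVec v) :
    (outer v).trace = 1 := by
  have h : (outer v).trace = dotProduct (star v) v := by
    simp only [Matrix.trace, Matrix.diag, outer, Matrix.vecMulVec_apply, dotProduct,
      Pi.star_apply]
    exact Finset.sum_congr rfl fun a _ => mul_comm _ _
  rw [h, dot_star_self, hv, Complex.ofReal_one]

lemma trace_mul_outer {n : Type} [Fintype n] (A : Matrix n n ℂ) (v : n → ℂ) :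
    (A * outer v).trace = dotProduct (star v) (A *ᵥ v) := by
  have h1 : (A * outer v).trace = ∑ a, ∑ b, A a b * (v b * star (v a)) := by
    simp [Matrix.trace, Matrix.diag, Matrix.mul_apply, outer, Matrix.vecMulVec_apply]
  have h2 : dotProduct (star v) (A *ᵥ v) = ∑ a, ∑ b, star (v a) * (A a b * v b) := by
    simp [dotProduct, Matrix.mulVec, Finset.mul_sum]
  rw [h1, h2]
  exact Finset.sum_congr rfl fun a _ => Finset.sum_congr rfl fun b _ => by ring

lemma posSemidef_outer {n : Type} [Fintype n] (v : n → ℂ) : (outer v).PosSemidef := by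
  rw [Matrix.posSemidef_iff_dotProduct_mulVec]
  constructor
  · ext a b
    simp only [Matrix.conjTranspose_apply, outer, Matrix.vecMulVec_apply, Pi.star_apply,
      star_mul', star_star]
    exact mul_comm _ _
  · intro x
    have h : (outer v) *ᵥ x = (dotProduct (star v) x) • v := by
      ext a
      simp only [Matrix.mulVec, dotProduct, outer, Matrix.vecMulVec_apply, Pi.smul_apply,
        Pi.star_apply, smul_eq_mul, Finset.sum_mul]
      exact Finset.sum_congr rfl fun b _ => by ring
    rw [h, dotProduct_smul, smul_eq_mul]
    have h2 : dotProduct (star x) v = star (dotProduct (star v) x) := by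
      simp only [dotProduct, star_sum, star_mul', star_star, Pi.star_apply]
      exact Finset.sum_congr rfl fun b _ => mul_comm _ _
    rw [h2]
    exact mul_star_self_nonneg _

section Channel

variable {dI dO : ℕ} (N : QChannel (Fin dI) (Fin dO))

lemma Napp_posSemidef {σ : Matrix (Fin dI) (Fin dI) ℂ} (hσ : σ.PosSemidef) :
    (N.app σ).PosSemidef := by
  unfold QChannel.app
  refine Finset.sum_induction _ _ (fun a b ha hb => ha.add hb) Matrix.PosSemidef.zero
    fun k _ => hσ.mul_mul_conjTranspose_same (N.A k)

lemma Napp_trace (σ : Matrix (Fin dI) (Fin dI) ℂ) : (N.app σ).trace = σ.trace := by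
  unfold QChannel.app
  rw [Matrix.trace_sum]
  have h : ∀ k, (N.A k * σ * (N.A k)ᴴ).trace = ((N.A k)ᴴ * N.A k * σ).trace := by
    intro k
    rw [Matrix.trace_mul_cycle]
  rw [Finset.sum_congr rfl fun k _ => h k]
  have h2 : ∀ k : N.ι, ((N.A k)ᴴ * N.A k * σ) = ((N.A k)ᴴ * N.A k) * σ := fun k => rfl
  rw [← Matrix.trace_sum]
  rw [← Finset.sum_mul, N.complete, Matrix.one_mul]

end Channel

lemma trace_eq_sum_eigenvalues {n : Type} [Fintype n] [DecidableEq n]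
    {M : Matrix n n ℂ} (hM : M.IsHermitian) :
    M.trace = ((∑ i, hM.eigenvalues i : ℝ) : ℂ) := by
  conv_lhs => rw [hM.spectral_theorem, Unitary.conjStarAlgAut_apply]
  rw [Matrix.trace_mul_comm, ← Matrix.mul_assoc]
  have hU : (star (hM.eigenvectorUnitary : Matrix n n ℂ)) * (hM.eigenvectorUnitary : Matrix n n ℂ)
      = 1 := Matrix.mem_unitaryGroup_iff'.mp (hM.eigenvectorUnitary).2
  rw [hU, Matrix.one_mul, Matrix.trace_diagonal]
  simp [Complex.ofReal_sum]

lemma eigenvalues_sum_one {n : Type} [Fintype n] [DecidableEq n]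
    {M : Matrix n n ℂ} (hM : M.PosSemidef) (htr : M.trace = 1) :
    ∑ i, hM.1.eigenvalues i = 1 := by
  have := trace_eq_sum_eigenvalues hM.1
  rw [htr] at this
  exact_mod_cast this.symm

lemma vNEntropy_nonneg {n : Type} [Fintype n] [DecidableEq n]
    {M : Matrix n n ℂ} (hM : M.PosSemidef) (htr : M.trace = 1) :
    0 ≤ vNEntropy M := by
  rw [vNEntropy, dif_pos hM.1]
  rw [neg_nonneg]
  refine Finset.sum_nonpos fun i _ => ?_
  have h0 : 0 ≤ hM.1.eigenvalues i := hM.eigenvalues_nonneg i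
  have h1 : hM.1.eigenvalues i ≤ 1 := by
    have := eigenvalues_sum_one hM htr
    calc hM.1.eigenvalues i ≤ ∑ j, hM.1.eigenvalues j :=
          Finset.single_le_sum (fun j _ => hM.eigenvalues_nonneg j) (Finset.mem_univ i)
      _ = 1 := this
  exact mul_nonpos_of_nonneg_of_nonpos h0 (Real.log_nonpos h0 h1)

lemma vNEntropy_le_card {n : Type} [Fintype n] [DecidableEq n]
    {M : Matrix n n ℂ} (hM : M.PosSemidef) (htr : M.trace = 1) :
    vNEntropy M ≤ Fintype.card n := by
  rw [vNEntropy, dif_pos hM.1]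
  have h : ∀ i : n, -(hM.1.eigenvalues i * Real.log (hM.1.eigenvalues i)) ≤ 1 := by
    intro i
    have h0 : 0 ≤ hM.1.eigenvalues i := hM.eigenvalues_nonneg i
    rcases eq_or_lt_of_le h0 with h0' | h0'
    · simp [← h0']
    · set x := hM.1.eigenvalues i
      have hlog : Real.log x⁻¹ ≤ x⁻¹ - 1 := Real.log_le_sub_one_of_pos (by positivity)
      have : -(x * Real.log x) = x * Real.log x⁻¹ := by rw [Real.log_inv]; ring
      rw [this]
      calc x * Real.log x⁻¹ ≤ x * (x⁻¹ - 1) := by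
            exact mul_le_mul_of_nonneg_left hlog h0
        _ = 1 - x := by field_simp
        _ ≤ 1 := by linarith
  calc -∑ i, hM.1.eigenvalues i * Real.log (hM.1.eigenvalues i)
      = ∑ i, -(hM.1.eigenvalues i * Real.log (hM.1.eigenvalues i)) := by
        rw [← Finset.sum_neg_distrib]
    _ ≤ ∑ _i : n, (1 : ℝ) := Finset.sum_le_sum fun i _ => h i
    _ = Fintype.card n := by simp

lemma ofReal_smul_mat {m n : Type} (r : ℝ) (M : Matrix m n ℂ) : (r : ℂ) • M = r • M := by
  ext a b
  simp [Complex.real_smul]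

section Ens

variable {dI dO : ℕ} (N : QChannel (Fin dI) (Fin dO))

/-- The set of average output entropies of ensembles (with nonnegative weights and unit
vectors) decomposing `σ`. -/
def ensSet (σ : Matrix (Fin dI) (Fin dI) ℂ) : Set ℝ :=
  {x | ∃ (n : ℕ) (p : Fin n → ℝ) (v : Fin n → Fin dI → ℂ),
    (∀ i, 0 ≤ p i) ∧ (∀ i, IsUnitVec (v i)) ∧
    (∑ i, (p i : ℂ) • outer (v i)) = σ ∧
    x = ∑ i, p i * vNEntropy (N.app (outer (v i)))}

/-- The minimal average output entropy over ensembles decomposing `σ`. -/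
def Fe (σ : Matrix (Fin dI) (Fin dI) ℂ) : ℝ := sInf (ensSet N σ)

lemma entropy_out_nonneg {v : Fin dI → ℂ} (hv : IsUnitVec v) :
    0 ≤ vNEntropy (N.app (outer v)) :=
  vNEntropy_nonneg (Napp_posSemidef N (posSemidef_outer v))
    (by rw [Napp_trace, trace_outer_eq_one hv])

lemma entropy_out_le {v : Fin dI → ℂ} (hv : IsUnitVec v) :
    vNEntropy (N.app (outer v)) ≤ dO := by
  have := vNEntropy_le_card (Napp_posSemidef N (posSemidef_outer v))
    (by rw [Napp_trace, trace_outer_eq_one hv])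
  simpa using this

lemma ensSet_nonneg {σ : Matrix (Fin dI) (Fin dI) ℂ} :
    ∀ x ∈ ensSet N σ, 0 ≤ x := by
  rintro x ⟨n, p, v, hp, hv, -, rfl⟩
  exact Finset.sum_nonneg fun i _ => mul_nonneg (hp i) (entropy_out_nonneg N (hv i))

lemma ensSet_bddBelow (σ : Matrix (Fin dI) (Fin dI) ℂ) : BddBelow (ensSet N σ) :=
  ⟨0, fun x hx => ensSet_nonneg N x hx⟩

lemma exists_ens {σ : Matrix (Fin dI) (Fin dI) ℂ} (hσ : σ.PosSemidef) :
    ∃ x ∈ ensSet N σ, x ≤ σ.trace.re * dO := by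
  classical
  set h : σ.IsHermitian := hσ.1 with hh
  set U : Matrix (Fin dI) (Fin dI) ℂ := (h.eigenvectorUnitary : Matrix (Fin dI) (Fin dI) ℂ)
    with hUdef
  have hcolunit : ∀ i, IsUnitVec (fun a => U a i) := by
    intro i
    have h1 : star U * U = 1 := Matrix.mem_unitaryGroup_iff'.mp h.eigenvectorUnitary.2
    have h2 := congrFun (congrFun h1 i) i
    simp only [Matrix.mul_apply, Matrix.star_apply, Matrix.one_apply_eq] at h2
    have h3 : dotProduct (star (fun a => U a i)) (fun a => U a i) = 1 := by
      simpa [dotProduct] using h2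
    rw [dot_star_self] at h3
    exact_mod_cast h3
  refine ⟨∑ i, h.eigenvalues i * vNEntropy (N.app (outer (fun a => U a i))),
    ⟨dI, h.eigenvalues, fun i a => U a i, fun i => hσ.eigenvalues_nonneg i, hcolunit, ?_, rfl⟩, ?_⟩
  · ext a b
    have hspec := h.spectral_theorem
    conv_rhs => rw [hspec, Unitary.conjStarAlgAut_apply, Matrix.mul_assoc]
    simp only [Matrix.sum_apply, Matrix.smul_apply, outer, Matrix.vecMulVec_apply,
      smul_eq_mul, Matrix.mul_apply, Matrix.diagonal_mul, Matrix.star_apply,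
      Pi.star_apply, Function.comp]
    refine Finset.sum_congr rfl fun j _ => ?_
    rw [Finset.sum_eq_single j (fun x _ hx => by
      simp [Matrix.diagonal_apply, Ne.symm hx]) (by simp)]
    simp only [Matrix.diagonal_apply_eq, Matrix.star_apply, Function.comp_apply]
    rw [show (RCLike.ofReal (h.eigenvalues j) : ℂ) = ((h.eigenvalues j : ℝ) : ℂ) from rfl]
    ring
  · have htr : σ.trace.re = ∑ i, h.eigenvalues i := by
      rw [trace_eq_sum_eigenvalues h, Complex.ofReal_re]
    rw [htr, Finset.sum_mul]
    refine Finset.sum_le_sum fun i _ => ?_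
    exact mul_le_mul_of_nonneg_left (entropy_out_le N (hcolunit i)) (hσ.eigenvalues_nonneg i)

lemma ensSet_nonempty {σ : Matrix (Fin dI) (Fin dI) ℂ} (hσ : σ.PosSemidef) :
    (ensSet N σ).Nonempty := by
  obtain ⟨x, hx, -⟩ := exists_ens N hσ
  exact ⟨x, hx⟩

lemma Fe_le_trace_mul {σ : Matrix (Fin dI) (Fin dI) ℂ} (hσ : σ.PosSemidef) :
    Fe N σ ≤ σ.trace.re * dO := by
  obtain ⟨x, hx, hle⟩ := exists_ens N hσ
  exact csInf_le_of_le (ensSet_bddBelow N σ) hx hle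

lemma Fe_le_entropy {v : Fin dI → ℂ} (hv : IsUnitVec v) :
    Fe N (outer v) ≤ vNEntropy (N.app (outer v)) := by
  refine csInf_le (ensSet_bddBelow N _) ?_
  refine ⟨1, fun _ => 1, fun _ => v, fun _ => zero_le_one, fun _ => hv, ?_, ?_⟩ <;> simp

lemma Fe_convex {σ₁ σ₂ : Matrix (Fin dI) (Fin dI) ℂ} (h₁ : σ₁.PosSemidef) (h₂ : σ₂.PosSemidef)
    {a b : ℝ} (ha : 0 ≤ a) (hb : 0 ≤ b) (hab : a + b = 1) :
    Fe N (a • σ₁ + b • σ₂) ≤ a * Fe N σ₁ + b * Fe N σ₂ := by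
  refine le_of_forall_pos_le_add fun ε hε => ?_
  obtain ⟨x, hx, hxlt⟩ := exists_lt_of_csInf_lt (ensSet_nonempty N h₁)
    (lt_add_of_pos_right (Fe N σ₁) (half_pos hε))
  obtain ⟨y, hy, hylt⟩ := exists_lt_of_csInf_lt (ensSet_nonempty N h₂)
    (lt_add_of_pos_right (Fe N σ₂) (half_pos hε))
  obtain ⟨n, p, v, hp, hv, hs, hxval⟩ := hx
  obtain ⟨m, q, w, hq, hw, ht, hyval⟩ := hy
  have hmem : a * x + b * y ∈ ensSet N (a • σ₁ + b • σ₂) := by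
    refine ⟨n + m, Fin.append (fun i => a * p i) (fun j => b * q j), Fin.append v w,
      ?_, ?_, ?_, ?_⟩
    · intro i
      refine Fin.addCases (fun i => ?_) (fun j => ?_) i
      · rw [Fin.append_left]; exact mul_nonneg ha (hp i)
      · rw [Fin.append_right]; exact mul_nonneg hb (hq j)
    · intro i
      refine Fin.addCases (fun i => ?_) (fun j => ?_) i
      · rw [Fin.append_left]; exact hv i
      · rw [Fin.append_right]; exact hw j
    · rw [Fin.sum_univ_add]
      have e₁ : ∀ i : Fin n,
          ((Fin.append (fun i => a * p i) (fun j => b * q j) (Fin.castAdd m i) : ℝ) : ℂ) •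
            outer (Fin.append v w (Fin.castAdd m i))
          = (a : ℂ) • ((p i : ℂ) • outer (v i)) := by
        intro i
        rw [Fin.append_left, Fin.append_left, smul_smul]
        push_cast
        ring_nf
      have e₂ : ∀ j : Fin m,
          ((Fin.append (fun i => a * p i) (fun j => b * q j) (Fin.natAdd n j) : ℝ) : ℂ) •
            outer (Fin.append v w (Fin.natAdd n j))
          = (b : ℂ) • ((q j : ℂ) • outer (w j)) := by
        intro j
        rw [Fin.append_right, Fin.append_right, smul_smul]
        push_cast
        ring_nf
      rw [Finset.sum_congr rfl fun i _ => e₁ i, Finset.sum_congr rfl fun j _ => e₂ j,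
        ← Finset.smul_sum, ← Finset.smul_sum, hs, ht, ofReal_smul_mat, ofReal_smul_mat]
    · rw [Fin.sum_univ_add, hxval, hyval, Finset.mul_sum, Finset.mul_sum]
      congr 1
      · refine Finset.sum_congr rfl fun i _ => ?_
        rw [Fin.append_left, Fin.append_left, mul_assoc]
      · refine Finset.sum_congr rfl fun j _ => ?_
        rw [Fin.append_right, Fin.append_right, mul_assoc]
  have hFe : Fe N (a • σ₁ + b • σ₂) ≤ a * x + b * y :=
    csInf_le (ensSet_bddBelow N _) hmem
  have hax : a * x ≤ a * (Fe N σ₁ + ε / 2) := mul_le_mul_of_nonneg_left hxlt.le ha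
  have hby : b * y ≤ b * (Fe N σ₂ + ε / 2) := mul_le_mul_of_nonneg_left hylt.le hb
  nlinarith [hε.le]

lemma ens_weights_sum_one {σ : Matrix (Fin dI) (Fin dI) ℂ} (hσtr : σ.trace = 1)
    {n : ℕ} {p : Fin n → ℝ} {v : Fin n → Fin dI → ℂ} (hv : ∀ i, IsUnitVec (v i))
    (hs : (∑ i, (p i : ℂ) • outer (v i)) = σ) : ∑ i, p i = 1 := by
  have h1 := congrArg Matrix.trace hs
  rw [Matrix.trace_sum] at h1
  have h2 : ∀ i : Fin n, ((p i : ℂ) • outer (v i)).trace = (p i : ℂ) := by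
    intro i
    rw [Matrix.trace_smul, trace_outer_eq_one (hv i), smul_eq_mul, mul_one]
  rw [Finset.sum_congr rfl fun i _ => h2 i, hσtr, ← Complex.ofReal_sum] at h1
  exact_mod_cast h1

lemma cap_eq {ρ : Matrix (Fin dI) (Fin dI) ℂ} (hρ : ρ.PosSemidef) (hρtr : ρ.trace = 1) :
    cHolevoCap N ρ = vNEntropy (N.app ρ) - Fe N ρ := by
  set E0 := vNEntropy (N.app ρ) with hE0
  have hset : {x | ∃ (n : ℕ) (p : Fin n → ℝ) (v : Fin n → Fin dI → ℂ),
      (∀ i, 0 ≤ p i) ∧ (∑ i, p i = 1) ∧ (∀ i, IsUnitVec (v i)) ∧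
      (∑ i, (p i : ℂ) • outer (v i)) = ρ ∧
      x = vNEntropy (N.app ρ) - ∑ i, p i * vNEntropy (N.app (outer (v i)))}
      = (fun y => E0 - y) '' ensSet N ρ := by
    ext x
    constructor
    · rintro ⟨n, p, v, hp, hp1, hun, hs, rfl⟩
      exact ⟨∑ i, p i * vNEntropy (N.app (outer (v i))), ⟨n, p, v, hp, hun, hs, rfl⟩, rfl⟩
    · rintro ⟨y, ⟨n, p, v, hp, hun, hs, rfl⟩, rfl⟩
      exact ⟨n, p, v, hp, ens_weights_sum_one hρtr hun hs, hun, hs, rfl⟩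
  have hcap : cHolevoCap N ρ = sSup ((fun y => E0 - y) '' ensSet N ρ) := by
    rw [cHolevoCap, hset]
  rw [hcap]
  have hne : (ensSet N ρ).Nonempty := ensSet_nonempty N hρ
  have hbddA : BddAbove ((fun y => E0 - y) '' ensSet N ρ) := by
    refine ⟨E0, ?_⟩
    rintro x ⟨y, hy, rfl⟩
    have := ensSet_nonneg N y hy
    simp only
    linarith
  apply le_antisymm
  · refine csSup_le (hne.image _) ?_
    rintro x ⟨y, hy, rfl⟩
    have h1 : Fe N ρ ≤ y := csInf_le (ensSet_bddBelow N ρ) hy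
    simp only
    linarith
  · have h1 : E0 - sSup ((fun y => E0 - y) '' ensSet N ρ) ≤ Fe N ρ := by
      refine le_csInf hne fun y hy => ?_
      have h2 : E0 - y ≤ sSup ((fun y => E0 - y) '' ensSet N ρ) :=
        le_csSup hbddA ⟨y, hy, rfl⟩
      linarith
    linarith

end Ens

section Geom

attribute [local instance] Matrix.frobeniusNormedAddCommGroup Matrix.frobeniusNormedSpace

variable {dI dO : ℕ}

lemma star_mul_self_norm (z : ℂ) : star z * z = ((‖z‖ ^ 2 : ℝ) : ℂ) := by
  rw [Complex.star_def, mul_comm, Complex.mul_conj, Complex.normSq_eq_norm_sq]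

lemma frob_norm_sq (A : Matrix (Fin dI) (Fin dI) ℂ) :
    ‖A‖ ^ 2 = ∑ i, ∑ j, ‖A i j‖ ^ 2 := by
  have e : ∀ i j : Fin dI, ‖A i j‖ ^ (2 : ℝ) = ‖A i j‖ ^ (2 : ℕ) := fun i j => by
    rw [show (2 : ℝ) = ((2 : ℕ) : ℝ) by norm_num, Real.rpow_natCast]
  have h0 : (0 : ℝ) ≤ ∑ i, ∑ j, ‖A i j‖ ^ (2 : ℕ) := by positivity
  rw [Matrix.frobenius_norm_def]
  simp_rw [e]
  rw [← Real.rpow_natCast ((∑ i, ∑ j, ‖A i j‖ ^ (2 : ℕ)) ^ (1 / 2 : ℝ)) 2,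
    ← Real.rpow_mul h0]
  norm_num

lemma frob_entry_le (A : Matrix (Fin dI) (Fin dI) ℂ) (i j : Fin dI) : ‖A i j‖ ≤ ‖A‖ := by
  have h2 : ‖A i j‖ ^ 2 ≤ ‖A‖ ^ 2 := by
    rw [frob_norm_sq]
    calc ‖A i j‖ ^ 2 ≤ ∑ j', ‖A i j'‖ ^ 2 :=
          Finset.single_le_sum (f := fun j' => ‖A i j'‖ ^ 2)
            (fun j' _ => by positivity) (Finset.mem_univ j)
      _ ≤ ∑ i', ∑ j', ‖A i' j'‖ ^ 2 :=
          Finset.single_le_sum (f := fun i' => ∑ j', ‖A i' j'‖ ^ 2)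
            (fun i' _ => by positivity) (Finset.mem_univ i)
  exact (pow_le_pow_iff_left₀ (norm_nonneg _) (norm_nonneg _) two_ne_zero).mp h2

lemma quad_bound (Δ : Matrix (Fin dI) (Fin dI) ℂ) (v : Fin dI → ℂ) :
    |(dotProduct (star v) (Δ *ᵥ v)).re| ≤ ‖Δ‖ * ∑ a, ‖v a‖ ^ 2 := by
  have hrw : dotProduct (star v) (Δ *ᵥ v)
      = ∑ a, ∑ b, star (v a) * (Δ a b * v b) := by
    simp [dotProduct, Matrix.mulVec, Finset.mul_sum]
  have h1 : |(dotProduct (star v) (Δ *ᵥ v)).re|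
      ≤ ∑ a, ∑ b, ‖Δ a b‖ * (‖v a‖ * ‖v b‖) := by
    rw [hrw]
    calc |(∑ a, ∑ b, star (v a) * (Δ a b * v b)).re|
        ≤ ‖∑ a, ∑ b, star (v a) * (Δ a b * v b)‖ := by
          exact Complex.abs_re_le_norm _
      _ ≤ ∑ a, ‖∑ b, star (v a) * (Δ a b * v b)‖ := norm_sum_le _ _
      _ ≤ ∑ a, ∑ b, ‖star (v a) * (Δ a b * v b)‖ :=
          Finset.sum_le_sum fun a _ => norm_sum_le _ _
      _ = ∑ a, ∑ b, ‖Δ a b‖ * (‖v a‖ * ‖v b‖) := by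
          refine Finset.sum_congr rfl fun a _ => Finset.sum_congr rfl fun b _ => ?_
          rw [norm_mul, norm_mul, norm_star]
          ring
  refine h1.trans ?_
  have hCS := Finset.sum_mul_sq_le_sq_mul_sq Finset.univ (fun x : Fin dI × Fin dI => ‖Δ x.1 x.2‖)
    (fun x : Fin dI × Fin dI => ‖v x.1‖ * ‖v x.2‖)
  have hf : ∑ x : Fin dI × Fin dI, ‖Δ x.1 x.2‖ ^ 2 = ‖Δ‖ ^ 2 := by
    rw [frob_norm_sq, ← Finset.sum_product']
    rfl
  have hg : ∑ x : Fin dI × Fin dI, (‖v x.1‖ * ‖v x.2‖) ^ 2 = (∑ a, ‖v a‖ ^ 2) ^ 2 := by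
    rw [sq (∑ a, ‖v a‖ ^ 2), Finset.sum_mul_sum, ← Finset.sum_product']
    refine Finset.sum_congr rfl fun x _ => ?_
    ring
  rw [hf, hg] at hCS
  have hXnn : (0 : ℝ) ≤ ∑ x : Fin dI × Fin dI, ‖Δ x.1 x.2‖ * (‖v x.1‖ * ‖v x.2‖) :=
    Finset.sum_nonneg fun x _ => by positivity
  have hYnn : (0 : ℝ) ≤ ‖Δ‖ * ∑ a, ‖v a‖ ^ 2 := by positivity
  have key : ∑ x : Fin dI × Fin dI, ‖Δ x.1 x.2‖ * (‖v x.1‖ * ‖v x.2‖)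
      ≤ ‖Δ‖ * ∑ a, ‖v a‖ ^ 2 := by
    have h3 : (∑ x : Fin dI × Fin dI, ‖Δ x.1 x.2‖ * (‖v x.1‖ * ‖v x.2‖)) ^ 2
        ≤ (‖Δ‖ * ∑ a, ‖v a‖ ^ 2) ^ 2 := by
      calc _ ≤ ‖Δ‖ ^ 2 * (∑ a, ‖v a‖ ^ 2) ^ 2 := hCS
        _ = (‖Δ‖ * ∑ a, ‖v a‖ ^ 2) ^ 2 := by ring
    calc ∑ x : Fin dI × Fin dI, ‖Δ x.1 x.2‖ * (‖v x.1‖ * ‖v x.2‖)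
        = Real.sqrt ((∑ x : Fin dI × Fin dI, ‖Δ x.1 x.2‖ * (‖v x.1‖ * ‖v x.2‖)) ^ 2) :=
          (Real.sqrt_sq hXnn).symm
      _ ≤ Real.sqrt ((‖Δ‖ * ∑ a, ‖v a‖ ^ 2) ^ 2) := Real.sqrt_le_sqrt h3
      _ = ‖Δ‖ * ∑ a, ‖v a‖ ^ 2 := Real.sqrt_sq hYnn
  calc ∑ a, ∑ b, ‖Δ a b‖ * (‖v a‖ * ‖v b‖)
      = ∑ x : Fin dI × Fin dI, ‖Δ x.1 x.2‖ * (‖v x.1‖ * ‖v x.2‖) :=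
        (Finset.sum_product' (f := fun a b => ‖Δ a b‖ * (‖v a‖ * ‖v b‖))
          Finset.univ Finset.univ).symm
    _ ≤ ‖Δ‖ * ∑ a, ‖v a‖ ^ 2 := key

lemma trace_re_bound (Δ : Matrix (Fin dI) (Fin dI) ℂ) : |Δ.trace.re| ≤ dI * ‖Δ‖ := by
  have h1 : Δ.trace.re = ∑ a, (Δ a a).re := by
    rw [Matrix.trace]
    exact Complex.re_sum _ _
  rw [h1]
  calc |∑ a, (Δ a a).re| ≤ ∑ a, |(Δ a a).re| := Finset.abs_sum_le_sum_abs _ _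
    _ ≤ ∑ a, ‖Δ a a‖ := Finset.sum_le_sum fun a _ => by
        exact Complex.abs_re_le_norm _
    _ ≤ ∑ _a : Fin dI, ‖Δ‖ := Finset.sum_le_sum fun a _ => frob_entry_le Δ a a
    _ = dI * ‖Δ‖ := by simp [mul_comm]

lemma posDef_lower {ρ : Matrix (Fin dI) (Fin dI) ℂ} (hρ : ρ.PosDef) :
    ∃ c > (0 : ℝ), ∀ v : Fin dI → ℂ,
      c * ∑ a, ‖v a‖ ^ 2 ≤ (dotProduct (star v) (ρ *ᵥ v)).re := by
  rcases Nat.eq_zero_or_pos dI with hd | hd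
  · subst hd
    exact ⟨1, one_pos, fun v => by simp [dotProduct]⟩
  · haveI : NeZero dI := ⟨hd.ne'⟩
    have h : ρ.IsHermitian := hρ.1
    have hne : (Finset.univ : Finset (Fin dI)).Nonempty := Finset.univ_nonempty
    set c := Finset.univ.inf' hne h.eigenvalues with hc
    have hcpos : 0 < c := by
      rw [hc, Finset.lt_inf'_iff]
      exact fun i _ => hρ.eigenvalues_pos i
    have hcle : ∀ i, c ≤ h.eigenvalues i := fun i => Finset.inf'_le _ (Finset.mem_univ i)
    refine ⟨c, hcpos, fun v => ?_⟩
    set U : Matrix (Fin dI) (Fin dI) ℂ := (h.eigenvectorUnitary : Matrix (Fin dI) (Fin dI) ℂ)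
      with hUdef
    set w : Fin dI → ℂ := (star U) *ᵥ v with hw
    have hUU : U * Uᴴ = 1 := by
      rw [← Matrix.star_eq_conjTranspose]
      exact Matrix.mem_unitaryGroup_iff.mp h.eigenvectorUnitary.2
    have hsw : star v ᵥ* U = star w := by
      rw [hw, Matrix.star_mulVec, Matrix.star_eq_conjTranspose,
        Matrix.conjTranspose_conjTranspose]
    have key : dotProduct (star v) (ρ *ᵥ v)
        = ∑ i, (h.eigenvalues i : ℂ) * ((‖w i‖ ^ 2 : ℝ) : ℂ) := by
      conv_lhs => rw [h.spectral_theorem, Unitary.conjStarAlgAut_apply]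
      rw [← Matrix.mulVec_mulVec, ← Matrix.mulVec_mulVec, Matrix.dotProduct_mulVec, hsw,
        ← hw]
      simp only [dotProduct, Matrix.mulVec_diagonal, Pi.star_apply,
        Function.comp_apply]
      refine Finset.sum_congr rfl fun i _ => ?_
      rw [show (RCLike.ofReal (h.eigenvalues i) : ℂ) = ((h.eigenvalues i : ℝ) : ℂ) from rfl,
        ← star_mul_self_norm (w i)]
      ring
    have hwnorm : ∑ i, ‖w i‖ ^ 2 = ∑ a, ‖v a‖ ^ 2 := by
      have h1 : dotProduct (star w) w = dotProduct (star v) v := by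
        rw [hw, Matrix.star_mulVec, Matrix.star_eq_conjTranspose,
          Matrix.conjTranspose_conjTranspose, ← Matrix.dotProduct_mulVec,
          Matrix.mulVec_mulVec, hUU, Matrix.one_mulVec]
      rw [dot_star_self, dot_star_self] at h1
      exact_mod_cast h1
    have hre : (dotProduct (star v) (ρ *ᵥ v)).re = ∑ i, h.eigenvalues i * ‖w i‖ ^ 2 := by
      rw [key, Complex.re_sum]
      refine Finset.sum_congr rfl fun i _ => ?_
      rw [← Complex.ofReal_mul, Complex.ofReal_re]
    rw [hre, ← hwnorm, Finset.mul_sum]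
    exact Finset.sum_le_sum fun i _ =>
      mul_le_mul_of_nonneg_right (hcle i) (by positivity)

/-- The Hermitian part of a matrix. -/
def Pm (σ : Matrix (Fin dI) (Fin dI) ℂ) : Matrix (Fin dI) (Fin dI) ℂ := (2 : ℝ)⁻¹ • (σ + σᴴ)

lemma Pm_herm (σ : Matrix (Fin dI) (Fin dI) ℂ) : (Pm σ).IsHermitian := by
  show _ᴴ = _
  unfold Pm
  rw [Matrix.conjTranspose_smul, star_trivial, Matrix.conjTranspose_add,
    Matrix.conjTranspose_conjTranspose, add_comm]

lemma Pm_of_herm {σ : Matrix (Fin dI) (Fin dI) ℂ} (hσ : σ.IsHermitian) : Pm σ = σ := by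
  unfold Pm
  rw [show σᴴ = σ from hσ, ← two_smul ℝ σ, smul_smul]
  norm_num

lemma Pm_add (σ σ' : Matrix (Fin dI) (Fin dI) ℂ) : Pm (σ + σ') = Pm σ + Pm σ' := by
  unfold Pm
  rw [Matrix.conjTranspose_add]
  rw [show σ + σ' + (σᴴ + σ'ᴴ) = (σ + σᴴ) + (σ' + σ'ᴴ) by abel, smul_add]

lemma Pm_smul (r : ℝ) (σ : Matrix (Fin dI) (Fin dI) ℂ) : Pm (r • σ) = r • Pm σ := by
  unfold Pm
  rw [Matrix.conjTranspose_smul, star_trivial, ← smul_add, smul_comm]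

lemma posSemidef_real_smul {M : Matrix (Fin dI) (Fin dI) ℂ} (hM : M.PosSemidef) {r : ℝ}
    (hr : 0 ≤ r) : (r • M).PosSemidef := by
  rw [Matrix.posSemidef_iff_dotProduct_mulVec]
  constructor
  · show (r • M)ᴴ = r • M
    rw [Matrix.conjTranspose_smul, star_trivial, hM.1.eq]
  · intro x
    rw [Matrix.smul_mulVec, dotProduct_smul, Complex.real_smul]
    exact mul_nonneg (Complex.zero_le_real.mpr hr) (hM.dotProduct_mulVec_nonneg x)

/-- Matrices with positive semidefinite Hermitian part. -/
def Kset (dI : ℕ) : Set (Matrix (Fin dI) (Fin dI) ℂ) := {σ | (Pm σ).PosSemidef}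

/-- `Fe` composed with the Hermitian part projection. -/
def Ft (N : QChannel (Fin dI) (Fin dO)) (σ : Matrix (Fin dI) (Fin dI) ℂ) : ℝ := Fe N (Pm σ)

lemma psd_mem_Kset {σ : Matrix (Fin dI) (Fin dI) ℂ} (hσ : σ.PosSemidef) : σ ∈ Kset dI := by
  show (Pm σ).PosSemidef
  rw [Pm_of_herm hσ.1]
  exact hσ

lemma Ft_of_herm {σ : Matrix (Fin dI) (Fin dI) ℂ} (hσ : σ.IsHermitian)
    (N : QChannel (Fin dI) (Fin dO)) : Ft N σ = Fe N σ := by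
  rw [Ft, Pm_of_herm hσ]

lemma Kset_convex : Convex ℝ (Kset dI) := by
  intro x hx y hy a b ha hb _
  show (Pm (a • x + b • y)).PosSemidef
  rw [Pm_add, Pm_smul, Pm_smul]
  exact (posSemidef_real_smul hx ha).add (posSemidef_real_smul hy hb)

lemma convexOn_Ft (N : QChannel (Fin dI) (Fin dO)) : ConvexOn ℝ (Kset dI) (Ft N) := by
  refine ⟨Kset_convex, fun σ hσ σ' hσ' a b ha hb hab => ?_⟩
  simp only [Ft, smul_eq_mul]
  rw [Pm_add, Pm_smul, Pm_smul]
  exact Fe_convex N hσ hσ' ha hb hab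

lemma herm_dot_real {M : Matrix (Fin dI) (Fin dI) ℂ} (hM : M.IsHermitian) (x : Fin dI → ℂ) :
    dotProduct (star x) (M *ᵥ x)
      = (((dotProduct (star x) (M *ᵥ x)).re : ℝ) : ℂ) := by
  refine (Complex.conj_eq_iff_re.mp ?_).symm
  conv_lhs => rw [Matrix.star_dotProduct]
  rw [starRingEnd_apply, star_star, Matrix.star_mulVec, ← Matrix.dotProduct_mulVec, hM.eq]

lemma Pm_norm_le (Δ : Matrix (Fin dI) (Fin dI) ℂ) : ‖Pm Δ‖ ≤ ‖Δ‖ := by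
  unfold Pm
  calc ‖(2:ℝ)⁻¹ • (Δ + Δᴴ)‖ = (2:ℝ)⁻¹ * ‖Δ + Δᴴ‖ := by
        rw [norm_smul]
        norm_num
    _ ≤ (2:ℝ)⁻¹ * (‖Δ‖ + ‖Δᴴ‖) := by
        have := norm_add_le Δ Δᴴ
        nlinarith
    _ = ‖Δ‖ := by rw [Matrix.frobenius_norm_conjTranspose]; ring

lemma mem_interior_Kset {σ₀ : Matrix (Fin dI) (Fin dI) ℂ} (hpd : σ₀.PosDef) :
    σ₀ ∈ interior (Kset dI) := by
  obtain ⟨c, hc, hlow⟩ := posDef_lower hpd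
  refine mem_interior.mpr ⟨Metric.ball σ₀ c, ?_, Metric.isOpen_ball, Metric.mem_ball_self hc⟩
  intro σ hσ
  show (Pm σ).PosSemidef
  have hΔ : ‖σ - σ₀‖ < c := by rw [← dist_eq_norm]; exact hσ
  have hdecomp : Pm σ = σ₀ + Pm (σ - σ₀) := by
    conv_lhs => rw [show σ = σ₀ + (σ - σ₀) by abel]
    rw [Pm_add, Pm_of_herm hpd.1]
  rw [Matrix.posSemidef_iff_dotProduct_mulVec]
  constructor
  · rw [hdecomp]
    exact Matrix.IsHermitian.add hpd.1 (Pm_herm _)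
  · intro x
    rw [hdecomp, Matrix.add_mulVec, dotProduct_add]
    rw [herm_dot_real hpd.1 x, herm_dot_real (Pm_herm (σ - σ₀)) x, ← Complex.ofReal_add,
      Complex.zero_le_real]
    have hq := quad_bound (Pm (σ - σ₀)) x
    have hl := hlow x
    have hPm := Pm_norm_le (σ - σ₀)
    have hs : (0:ℝ) ≤ ∑ a, ‖x a‖ ^ 2 := by positivity
    have h5 : ‖Pm (σ - σ₀)‖ * ∑ a, ‖x a‖ ^ 2 ≤ c * ∑ a, ‖x a‖ ^ 2 :=
      mul_le_mul_of_nonneg_right (hPm.trans hΔ.le) hs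
    linarith [(abs_le.mp hq).1]

/-- Epigraph of `Ft` over `Kset`. -/
def epi (N : QChannel (Fin dI) (Fin dO)) : Set ((Matrix (Fin dI) (Fin dI) ℂ) × ℝ) :=
  {w | w.1 ∈ Kset dI ∧ Ft N w.1 ≤ w.2}

lemma epi_convex (N : QChannel (Fin dI) (Fin dO)) : Convex ℝ (epi N) :=
  (convexOn_Ft N).convex_epigraph

lemma exists_interior_box {σ : Matrix (Fin dI) (Fin dI) ℂ} (hσ : σ ∈ interior (Kset dI))
    (N : QChannel (Fin dI) (Fin dO)) :
    ∃ C : ℝ, ∀ t > C, (σ, t) ∈ interior (epi N) := by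
  obtain ⟨V, hVs, hVo, hxV⟩ := mem_interior.mp hσ
  obtain ⟨δ, hδ, hball⟩ := Metric.isOpen_iff.mp hVo σ hxV
  refine ⟨((Pm σ).trace.re + dI * δ) * dO, fun t ht => ?_⟩
  refine mem_interior.mpr ⟨Metric.ball σ δ ×ˢ Set.Ioi (((Pm σ).trace.re + dI * δ) * dO), ?_,
    Metric.isOpen_ball.prod isOpen_Ioi, ⟨Metric.mem_ball_self hδ, ht⟩⟩
  rintro ⟨σ', t'⟩ ⟨hσ', ht'⟩
  have hKm : σ' ∈ Kset dI := hVs (hball hσ')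
  refine ⟨hKm, ?_⟩
  have h1 : Ft N σ' ≤ (Pm σ').trace.re * dO := Fe_le_trace_mul N hKm
  have h2 : (Pm σ').trace.re ≤ (Pm σ).trace.re + dI * δ := by
    have hde : Pm σ' = Pm σ + Pm (σ' - σ) := by
      conv_lhs => rw [show σ' = σ + (σ' - σ) by abel]
      rw [Pm_add]
    have htr : (Pm σ').trace = (Pm σ).trace + (Pm (σ' - σ)).trace := by
      rw [hde, Matrix.trace_add]
    have h3 := trace_re_bound (Pm (σ' - σ))
    have h4 : ‖Pm (σ' - σ)‖ ≤ ‖σ' - σ‖ := Pm_norm_le _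
    have h5 : ‖σ' - σ‖ < δ := by rw [← dist_eq_norm]; exact hσ'
    have h6 : (dI : ℝ) * ‖Pm (σ' - σ)‖ ≤ dI * δ := by
      have h7 : ‖Pm (σ' - σ)‖ ≤ δ := h4.trans h5.le
      exact mul_le_mul_of_nonneg_left h7 (Nat.cast_nonneg dI)
    rw [htr, Complex.add_re]
    linarith [(abs_le.mp h3).2]
  have ht'' : ((Pm σ).trace.re + dI * δ) * dO < t' := ht'
  calc Ft N σ' ≤ (Pm σ').trace.re * dO := h1
    _ ≤ ((Pm σ).trace.re + dI * δ) * dO := mul_le_mul_of_nonneg_right h2 (Nat.cast_nonneg dO)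
    _ ≤ t' := ht''.le

lemma mem_interior_epi {σ : Matrix (Fin dI) (Fin dI) ℂ} (hσ : σ ∈ interior (Kset dI))
    (N : QChannel (Fin dI) (Fin dO)) {t : ℝ} (ht : Ft N σ < t) :
    (σ, t) ∈ interior (epi N) := by
  obtain ⟨C, hC⟩ := exists_interior_box hσ N
  obtain ⟨T, hTC, hTt⟩ : ∃ T : ℝ, C < T ∧ t < T :=
    ⟨max C t + 1, lt_of_le_of_lt (le_max_left _ _) (lt_add_one _),
      lt_of_le_of_lt (le_max_right _ _) (lt_add_one _)⟩
  have hT : (σ, T) ∈ interior (epi N) := hC T hTC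
  have hy : (σ, Ft N σ) ∈ epi N := ⟨interior_subset hσ, le_rfl⟩
  have hTF : Ft N σ < T := ht.trans hTt
  set a : ℝ := (t - Ft N σ) / (T - Ft N σ) with hadef
  have ha : 0 < a := div_pos (by linarith) (by linarith)
  have ha1 : a ≤ 1 := by
    rw [hadef, div_le_one (by linarith)]
    linarith
  have hcombo := (epi_convex N).combo_interior_self_mem_interior hT hy ha
    (by linarith : (0:ℝ) ≤ 1 - a) (by ring)
  have hpt : a • ((σ, T) : (Matrix (Fin dI) (Fin dI) ℂ) × ℝ) + (1 - a) • (σ, Ft N σ)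
      = (σ, t) := by
    rw [Prod.smul_mk, Prod.smul_mk, Prod.mk_add_mk]
    congr 1
    · rw [← add_smul, show a + (1 - a) = 1 by ring, one_smul]
    · show a * T + (1 - a) * Ft N σ = t
      have hne : T - Ft N σ ≠ 0 := ne_of_gt (by linarith)
      rw [hadef]
      field_simp
      ring
  rw [← hpt]
  exact hcombo

lemma exists_trace_rep (ψ : Matrix (Fin dI) (Fin dI) ℂ →ₗ[ℝ] ℝ) :
    ∃ τ : Matrix (Fin dI) (Fin dI) ℂ,
      ∀ σ : Matrix (Fin dI) (Fin dI) ℂ, ((τ * σ).trace).re = ψ σ := by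
  classical
  set τ' : Matrix (Fin dI) (Fin dI) ℂ := Matrix.of fun a b =>
    ((ψ (Matrix.single b a 1) : ℝ) : ℂ)
      - ((ψ (Matrix.single b a Complex.I) : ℝ) : ℂ) * Complex.I with hτ'
  refine ⟨τ', fun σ => ?_⟩
  have hdecomp : σ = ∑ p : Fin dI × Fin dI,
      ((σ p.1 p.2).re • Matrix.single p.1 p.2 (1:ℂ)
        + (σ p.1 p.2).im • Matrix.single p.1 p.2 Complex.I) := by
    ext a b
    rw [Matrix.sum_apply]
    rw [Finset.sum_eq_single (a, b)]
    · simp only [Matrix.add_apply, Matrix.smul_apply, Matrix.single, Matrix.of_apply,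
        and_self, if_true]
      rw [Complex.real_smul, Complex.real_smul, mul_one]
      exact (Complex.re_add_im (σ a b)).symm
    · intro p _ hp
      have hcond : ¬(p.1 = a ∧ p.2 = b) := by
        rintro ⟨h1, h2⟩
        exact hp (Prod.ext h1 h2)
      simp [Matrix.single, hcond]
    · intro h
      exact absurd (Finset.mem_univ _) h
  have hRHS : ψ σ = ∑ p : Fin dI × Fin dI,
      ((σ p.1 p.2).re * ψ (Matrix.single p.1 p.2 (1:ℂ))
        + (σ p.1 p.2).im * ψ (Matrix.single p.1 p.2 Complex.I)) := by
    conv_lhs => rw [hdecomp]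
    rw [map_sum]
    refine Finset.sum_congr rfl fun p _ => ?_
    rw [map_add, _root_.map_smul, _root_.map_smul, smul_eq_mul, smul_eq_mul]
  have hLHS : ((τ' * σ).trace).re
      = ∑ a, ∑ b, ((σ b a).re * ψ (Matrix.single b a (1:ℂ))
        + (σ b a).im * ψ (Matrix.single b a Complex.I)) := by
    have htr : (τ' * σ).trace = ∑ a, ∑ b, τ' a b * σ b a := by
      simp [Matrix.trace, Matrix.diag, Matrix.mul_apply]
    rw [htr, Complex.re_sum]
    refine Finset.sum_congr rfl fun a _ => ?_
    rw [Complex.re_sum]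
    refine Finset.sum_congr rfl fun b _ => ?_
    simp only [hτ', Matrix.of_apply, Complex.sub_re, Complex.sub_im, Complex.mul_re,
      Complex.ofReal_re, Complex.ofReal_im, Complex.I_re, Complex.I_im, Complex.mul_im]
    ring
  rw [hLHS, hRHS, Fintype.sum_prod_type]
  exact Finset.sum_comm

end Geom

end CHLP

section Main

attribute [local instance] Matrix.frobeniusNormedAddCommGroup Matrix.frobeniusNormedSpace

open CHLP

/-- The linear programming dual formulation of the constrained Holevo capacity: for a
positive definite density matrix `ρ` there is a Hermitian `τ` with
`⟨v|τ|v⟩ ≤ H(N(|v⟩⟨v|))` for all unit vectors `v` and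
`χ_N(ρ) = H(N(ρ)) - Tr(τρ)`. -/
theorem cHolevoCap_lp_dual {dI dO : ℕ} (N : QChannel (Fin dI) (Fin dO))
    (ρ : Matrix (Fin dI) (Fin dI) ℂ) (hρ : ρ.PosDef) (hρtr : ρ.trace = 1) :
    ∃ τ : Matrix (Fin dI) (Fin dI) ℂ, τ.IsHermitian ∧
      (∀ v : Fin dI → ℂ, IsUnitVec v →
        (star v ⬝ᵥ τ *ᵥ v).re ≤ vNEntropy (N.app (outer v))) ∧
      cHolevoCap N ρ = vNEntropy (N.app ρ) - ((τ * ρ).trace).re := by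
  classical
  have hHerm : ρ.IsHermitian := hρ.1
  have hPSD : ρ.PosSemidef := hρ.posSemidef
  have hρK : ρ ∈ interior (Kset dI) := mem_interior_Kset hρ
  have hFtρ : Ft N ρ = Fe N ρ := Ft_of_herm hHerm N
  -- the point `(ρ, Fe N ρ)` is not in the interior of the epigraph
  have hx₀ : ((ρ, Fe N ρ) : Matrix (Fin dI) (Fin dI) ℂ × ℝ) ∉ interior (epi N) := by
    intro hmem
    obtain ⟨ε, hε, hball⟩ := Metric.mem_nhds_iff.mp (mem_interior_iff_mem_nhds.mp hmem)
    have hpt : ((ρ, Fe N ρ - ε / 2) : Matrix (Fin dI) (Fin dI) ℂ × ℝ)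
        ∈ Metric.ball ((ρ, Fe N ρ) : Matrix (Fin dI) (Fin dI) ℂ × ℝ) ε := by
      rw [Metric.mem_ball, Prod.dist_eq]
      have hd1 : dist ρ ρ = 0 := dist_self ρ
      have hd2 : dist (Fe N ρ - ε / 2) (Fe N ρ) = ε / 2 := by
        rw [Real.dist_eq]
        rw [show Fe N ρ - ε / 2 - Fe N ρ = -(ε / 2) by ring, abs_neg, abs_of_pos (half_pos hε)]
      rw [hd1, hd2]
      rw [max_eq_right (by linarith : (0:ℝ) ≤ ε / 2)]
      linarith
    have hepi := (hball hpt).2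
    rw [Ft_of_herm hHerm N] at hepi
    linarith
  obtain ⟨φ₀, hφ₀⟩ := geometric_hahn_banach_open_point
    ((epi_convex N).interior) isOpen_interior hx₀
  have hsplit₀ : ∀ (σ : Matrix (Fin dI) (Fin dI) ℂ) (t : ℝ),
      φ₀ (σ, t) = φ₀ (σ, 0) + t * φ₀ ((0 : Matrix (Fin dI) (Fin dI) ℂ), (1 : ℝ)) := by
    intro σ t
    have h1 : ((σ, t) : Matrix (Fin dI) (Fin dI) ℂ × ℝ)
        = (σ, 0) + t • ((0 : Matrix (Fin dI) (Fin dI) ℂ), (1 : ℝ)) := by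
      rw [Prod.smul_mk, Prod.mk_add_mk]
      simp
    rw [h1, map_add, map_smul, smul_eq_mul]
  obtain ⟨C, hCbox⟩ := exists_interior_box hρK N
  set β₀ : ℝ := φ₀ ((0 : Matrix (Fin dI) (Fin dI) ℂ), (1 : ℝ)) with hβ₀def
  have hβ₀neg : β₀ < 0 := by
    set t₀ := max C (Fe N ρ) + 1 with ht₀def
    have ht₀C : C < t₀ := lt_of_le_of_lt (le_max_left _ _) (lt_add_one _)
    have ht₀F : Fe N ρ < t₀ := lt_of_le_of_lt (le_max_right _ _) (lt_add_one _)
    have h2 := hφ₀ _ (hCbox t₀ ht₀C)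
    rw [hsplit₀ ρ t₀, hsplit₀ ρ (Fe N ρ)] at h2
    nlinarith
  set φ : (Matrix (Fin dI) (Fin dI) ℂ × ℝ) →L[ℝ] ℝ := (-β₀)⁻¹ • φ₀ with hφdef
  have hβ₀ne : -β₀ ≠ 0 := by linarith
  have hφapp : ∀ w, φ w = (-β₀)⁻¹ * φ₀ w := fun w => rfl
  have hφ : ∀ w ∈ interior (epi N), φ w < φ ((ρ, Fe N ρ) : Matrix (Fin dI) (Fin dI) ℂ × ℝ) := by
    intro w hw
    rw [hφapp, hφapp]
    exact mul_lt_mul_of_pos_left (hφ₀ w hw) (inv_pos.mpr (by linarith))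
  have hsplit : ∀ (σ : Matrix (Fin dI) (Fin dI) ℂ) (t : ℝ), φ (σ, t) = φ (σ, 0) - t := by
    intro σ t
    rw [hφapp, hφapp, hsplit₀ σ t]
    field_simp [hβ₀neg.ne]
    ring
  -- key inequality on the interior
  have key1 : ∀ σ ∈ interior (Kset dI), φ (σ, 0) - Ft N σ ≤ φ (ρ, 0) - Fe N ρ := by
    intro σ hσi
    refine le_of_forall_pos_le_add fun ε hε => ?_
    have hmem := mem_interior_epi hσi N (lt_add_of_pos_right (Ft N σ) hε)
    have h2 := hφ _ hmem
    rw [hsplit σ (Ft N σ + ε), hsplit ρ (Fe N ρ)] at h2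
    linarith
  -- key inequality on all of `Kset`
  have key2 : ∀ σ ∈ Kset dI, φ (σ, 0) - Ft N σ ≤ φ (ρ, 0) - Fe N ρ := by
    intro σ hσK
    have hhalf : ((2⁻¹ : ℝ) • ρ + (2⁻¹ : ℝ) • σ) ∈ interior (Kset dI) :=
      Kset_convex.combo_interior_self_mem_interior hρK hσK (by norm_num) (by norm_num)
        (by norm_num)
    have h1 := key1 _ hhalf
    have hφlin : φ (((2⁻¹ : ℝ) • ρ + (2⁻¹ : ℝ) • σ, 0) : Matrix (Fin dI) (Fin dI) ℂ × ℝ)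
        = 2⁻¹ * φ (ρ, 0) + 2⁻¹ * φ (σ, 0) := by
      have he : (((2⁻¹ : ℝ) • ρ + (2⁻¹ : ℝ) • σ, (0 : ℝ)) : Matrix (Fin dI) (Fin dI) ℂ × ℝ)
          = (2⁻¹ : ℝ) • ((ρ, 0) : Matrix (Fin dI) (Fin dI) ℂ × ℝ)
            + (2⁻¹ : ℝ) • ((σ, 0) : Matrix (Fin dI) (Fin dI) ℂ × ℝ) := by
        rw [Prod.smul_mk, Prod.smul_mk, Prod.mk_add_mk]
        norm_num
      rw [he, map_add, map_smul, map_smul, smul_eq_mul, smul_eq_mul]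
    have hFtc : Ft N ((2⁻¹ : ℝ) • ρ + (2⁻¹ : ℝ) • σ) ≤ 2⁻¹ * Ft N ρ + 2⁻¹ * Ft N σ := by
      have h3 := (convexOn_Ft N).2 (interior_subset hρK) hσK
        (by norm_num : (0:ℝ) ≤ 2⁻¹) (by norm_num : (0:ℝ) ≤ 2⁻¹) (by norm_num)
      simpa [smul_eq_mul] using h3
    rw [hφlin] at h1
    rw [hFtρ] at *
    linarith
  -- trace representation of the linear functional
  obtain ⟨τ', hτ'⟩ := exists_trace_rep
    ((φ.comp (ContinuousLinearMap.inl ℝ (Matrix (Fin dI) (Fin dI) ℂ) ℝ)).toLinearMap)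
  have hτ'app : ∀ σ : Matrix (Fin dI) (Fin dI) ℂ, ((τ' * σ).trace).re = φ (σ, 0) := by
    intro σ
    have := hτ' σ
    simpa using this
  set c : ℝ := Fe N ρ - φ (ρ, 0) with hcdef
  set τ : Matrix (Fin dI) (Fin dI) ℂ :=
    (2⁻¹ : ℝ) • (τ' + τ'ᴴ) + ((c : ℝ) : ℂ) • (1 : Matrix (Fin dI) (Fin dI) ℂ) with hτdef
  have htrace : ∀ σ : Matrix (Fin dI) (Fin dI) ℂ, σ.IsHermitian →
      ((τ * σ).trace).re = φ (σ, 0) + c * σ.trace.re := by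
    intro σ hσ
    have hconj : ((τ'ᴴ * σ).trace).re = ((τ' * σ).trace).re := by
      have h1 : (σ * τ')ᴴ = τ'ᴴ * σ := by rw [Matrix.conjTranspose_mul, hσ.eq]
      rw [← h1, Matrix.trace_conjTranspose, Matrix.trace_mul_comm]
      exact Complex.conj_re _
    have hexpand : τ * σ = (2⁻¹ : ℝ) • (τ' * σ + τ'ᴴ * σ) + ((c : ℝ) : ℂ) • σ := by
      rw [hτdef, Matrix.add_mul, Matrix.smul_mul, Matrix.add_mul, Matrix.smul_mul,
        Matrix.one_mul]
    rw [hexpand, Matrix.trace_add, Matrix.trace_smul, Matrix.trace_smul, Complex.add_re,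
      Matrix.trace_add]
    rw [Complex.real_smul, Complex.re_ofReal_mul, smul_eq_mul, Complex.re_ofReal_mul,
      Complex.add_re, hconj, hτ'app]
    ring
  refine ⟨τ, ?_, ?_, ?_⟩
  · show τᴴ = τ
    have h1 : ((2⁻¹ : ℝ) • (τ' + τ'ᴴ))ᴴ = (2⁻¹ : ℝ) • (τ' + τ'ᴴ) := by
      rw [Matrix.conjTranspose_smul, star_trivial, Matrix.conjTranspose_add,
        Matrix.conjTranspose_conjTranspose, add_comm]
    have h2 : (((c : ℝ) : ℂ) • (1 : Matrix (Fin dI) (Fin dI) ℂ))ᴴ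
        = ((c : ℝ) : ℂ) • (1 : Matrix (Fin dI) (Fin dI) ℂ) := by
      rw [Matrix.conjTranspose_smul, Matrix.conjTranspose_one, Complex.star_def,
        Complex.conj_ofReal]
    rw [hτdef, Matrix.conjTranspose_add, h1, h2]
  · intro v hv
    rw [show (star v ⬝ᵥ τ *ᵥ v) = ((τ * outer v).trace) from (trace_mul_outer τ v).symm]
    rw [htrace (outer v) (posSemidef_outer v).1, trace_outer_eq_one hv, Complex.one_re]
    have hK : outer v ∈ Kset dI := psd_mem_Kset (posSemidef_outer v)
    have h2 := key2 _ hK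
    rw [Ft_of_herm (posSemidef_outer v).1 N] at h2
    have h3 : Fe N (outer v) ≤ vNEntropy (N.app (outer v)) := Fe_le_entropy N hv
    rw [hcdef]
    linarith
  · rw [htrace ρ hHerm, hρtr, Complex.one_re, hcdef]
    rw [cap_eq N hPSD hρtr]
    ring

end Main

end
end

section
/- Reduction of strong superadditivity to pure states: if for every unit vector φ in ℂ^{a1}⊗ℂ^{a2}⊗ℂ^{b1}⊗ℂ^{b2} (regarded as bipartite with A-part ℂ^{a1}⊗ℂ^{a2} and B-part ℂ^{b1}⊗ℂ^{b2}) one has E_F(|φ⟩⟨φ|) ≥ E_F(Tr_2 |φ⟩⟨φ|) + E_F(Tr_1 |φ⟩⟨φ|), then for every density matrix σ on ℂ^{a1}⊗ℂ^{a2}⊗ℂ^{b1}⊗ℂ^{b2} one has E_F(σ) ≥ E_F(Tr_2 σ) + E_F(Tr_1 σ). -/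
open scoped Kronecker Matrix ComplexOrder

noncomputable section

/-! ### Auxiliary lemmas for the main theorem -/

lemma outer_posSemidef' {n : Type} [Fintype n] (v : n → ℂ) : (outer v).PosSemidef := by
  refine Matrix.PosSemidef.of_dotProduct_mulVec_nonneg ?_ ?_
  · ext i j
    simp [outer, Matrix.vecMulVec_apply, Matrix.conjTranspose_apply, mul_comm]
  · intro x
    have : star x ⬝ᵥ (outer v *ᵥ x) = (star x ⬝ᵥ v) * star (star x ⬝ᵥ v) := by
      simp only [outer, dotProduct, Matrix.mulVec, Matrix.vecMulVec_apply, Pi.star_apply,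
        star_sum, star_mul', RCLike.star_def, Finset.sum_mul, Finset.mul_sum]
      rw [Finset.sum_comm]
      apply Finset.sum_congr rfl; intro i _
      apply Finset.sum_congr rfl; intro j _
      simp [dotProduct]
      ring
    rw [this]
    exact mul_star_self_nonneg _

lemma outer_trace' {n : Type} [Fintype n] [DecidableEq n] {v : n → ℂ} (hv : IsUnitVec v) :
    (outer v).trace = 1 := by
  have : (outer v).trace = ∑ a, ((‖v a‖ ^ 2 : ℝ) : ℂ) := by
    simp [Matrix.trace, outer, Matrix.vecMulVec_apply, Matrix.diag, Complex.mul_conj,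
      Complex.normSq_eq_norm_sq]
  rw [this, ← Complex.ofReal_sum, hv, Complex.ofReal_one]

lemma outer_density {n : Type} [Fintype n] [DecidableEq n] {v : n → ℂ} (hv : IsUnitVec v) :
    IsDensityMatrix (outer v) :=
  ⟨outer_posSemidef' v, outer_trace' hv⟩

lemma trace_eq_sum_eigs {n : Type} [Fintype n] [DecidableEq n] {ρ : Matrix n n ℂ}
    (hH : ρ.IsHermitian) : ρ.trace = ∑ i, (hH.eigenvalues i : ℂ) := by
  conv_lhs => rw [hH.spectral_theorem, Unitary.conjStarAlgAut_apply]
  rw [Matrix.trace_mul_cycle, (Unitary.mem_iff.mp hH.eigenvectorUnitary.2).1, one_mul,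
    Matrix.trace_diagonal]
  rfl

lemma exists_decomp {n : Type} [Fintype n] [DecidableEq n] {ρ : Matrix n n ℂ}
    (hρ : ρ.PosSemidef) :
    ∃ (m : ℕ) (p : Fin m → ℝ) (v : Fin m → n → ℂ),
      (∀ i, 0 ≤ p i) ∧ (∀ i, IsUnitVec (v i)) ∧ ∑ i, (p i : ℂ) • outer (v i) = ρ := by
  classical
  have hH := hρ.isHermitian
  set U : Matrix n n ℂ := (hH.eigenvectorUnitary : Matrix n n ℂ) with hUdef
  have hUU : star U * U = 1 := (Unitary.mem_iff.mp hH.eigenvectorUnitary.2).1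
  set e := (Fintype.equivFin n).symm with he
  refine ⟨Fintype.card n, fun k => hH.eigenvalues (e k), fun k x => U x (e k),
    fun k => hρ.eigenvalues_nonneg _, ?_, ?_⟩
  · intro k
    have h1 : (star U * U) (e k) (e k) = 1 := by rw [hUU]; simp
    rw [Matrix.mul_apply] at h1
    have h2 : ∀ x, (star U) (e k) x * U x (e k) = ((‖U x (e k)‖ ^ 2 : ℝ) : ℂ) := by
      intro x
      rw [Matrix.star_apply, mul_comm, RCLike.star_def, Complex.mul_conj,
        Complex.normSq_eq_norm_sq]
    rw [Finset.sum_congr rfl (fun x _ => h2 x), ← Complex.ofReal_sum] at h1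
    exact_mod_cast h1
  · have hs := hH.spectral_theorem
    ext x y
    have hρxy : ρ x y = ∑ i, U x i * (hH.eigenvalues i : ℂ) * star (U y i) := by
      conv_lhs => rw [hs, Unitary.conjStarAlgAut_apply]
      rw [Matrix.mul_apply]
      apply Finset.sum_congr rfl; intro i _
      rw [Matrix.mul_diagonal]
      simp only [Matrix.star_apply, Matrix.IsHermitian.eigenvectorUnitary_apply, hUdef,
        Function.comp]
      generalize ((WithLp.equiv 2 (n → ℂ)) (hH.eigenvectorBasis i) x : ℂ) = a
      generalize (star ((WithLp.equiv 2 (n → ℂ)) (hH.eigenvectorBasis i) y) : ℂ) = b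
      rfl
    rw [Matrix.sum_apply, hρxy,
      ← Equiv.sum_comp e (fun i => U x i * (hH.eigenvalues i : ℂ) * star (U y i))]
    apply Finset.sum_congr rfl; intro k _
    simp only [Matrix.smul_apply, outer, Matrix.vecMulVec_apply, Pi.star_apply, smul_eq_mul]
    ring

lemma vNEntropy_nonneg {n : Type} [Fintype n] [DecidableEq n] {ρ : Matrix n n ℂ}
    (hρ : IsDensityMatrix ρ) : 0 ≤ vNEntropy ρ := by
  obtain ⟨hpsd, htr⟩ := hρ
  have hH := hpsd.isHermitian
  rw [vNEntropy, dif_pos hH]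
  have hsum : ∑ i, hH.eigenvalues i = 1 := by
    have := trace_eq_sum_eigs hH
    rw [htr] at this
    exact_mod_cast this.symm
  have hnn : ∀ i, 0 ≤ hH.eigenvalues i := hpsd.eigenvalues_nonneg
  have hle : ∀ i, hH.eigenvalues i ≤ 1 := by
    intro i
    rw [← hsum]
    exact Finset.single_le_sum (fun j _ => hnn j) (Finset.mem_univ i)
  rw [neg_nonneg]
  apply Finset.sum_nonpos
  intro i _
  exact mul_nonpos_of_nonneg_of_nonpos (hnn i) (Real.log_nonpos (hnn i) (hle i))

lemma traceB_posSemidef {A B : Type} [Fintype A] [Fintype B]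
    {σ : Matrix (A × B) (A × B) ℂ} (hσ : σ.PosSemidef) : (traceB σ).PosSemidef := by
  have : traceB σ = ∑ b, σ.submatrix (fun a => (a, b)) (fun a => (a, b)) := by
    ext a a'
    simp [traceB, Matrix.submatrix, Matrix.sum_apply]
  rw [this]
  exact Finset.sum_induction _ _ (fun _ _ h1 h2 => h1.add h2) Matrix.PosSemidef.zero
    (fun b _ => hσ.submatrix _)

lemma traceB_trace {A B : Type} [Fintype A] [Fintype B] [DecidableEq A]
    (σ : Matrix (A × B) (A × B) ℂ) : (traceB σ).trace = σ.trace := by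
  simp [traceB, Matrix.trace, Matrix.diag, Fintype.sum_prod_type]

lemma traceB_density {A B : Type} [Fintype A] [Fintype B] [DecidableEq A] [DecidableEq B]
    {σ : Matrix (A × B) (A × B) ℂ} (hσ : IsDensityMatrix σ) : IsDensityMatrix (traceB σ) :=
  ⟨traceB_posSemidef hσ.1, by rw [traceB_trace, hσ.2]⟩

def eq2 {A₁ A₂ B₁ B₂ : Type} :
    ((A₁ × A₂) × (B₁ × B₂)) ≃ ((A₁ × B₁) × (A₂ × B₂)) :=
  ⟨fun x => ((x.1.1, x.2.1), (x.1.2, x.2.2)), fun x => ((x.1.1, x.2.1), (x.1.2, x.2.2)),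
    fun _ => rfl, fun _ => rfl⟩

def eq1 {A₁ A₂ B₁ B₂ : Type} :
    ((A₁ × A₂) × (B₁ × B₂)) ≃ ((A₂ × B₂) × (A₁ × B₁)) :=
  ⟨fun x => ((x.1.2, x.2.2), (x.1.1, x.2.1)), fun x => ((x.2.1, x.1.1), (x.2.2, x.1.2)),
    fun _ => rfl, fun _ => rfl⟩

lemma trace2_eq_traceB {A₁ A₂ B₁ B₂ : Type} [Fintype A₂] [Fintype B₂]
    (σ : Matrix ((A₁ × A₂) × (B₁ × B₂)) ((A₁ × A₂) × (B₁ × B₂)) ℂ) :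
    trace2 σ = traceB (σ.submatrix eq2.symm eq2.symm) := by
  ext x y
  simp [trace2, traceB, eq2, Matrix.submatrix, Fintype.sum_prod_type]

lemma trace1_eq_traceB {A₁ A₂ B₁ B₂ : Type} [Fintype A₁] [Fintype B₁]
    (σ : Matrix ((A₁ × A₂) × (B₁ × B₂)) ((A₁ × A₂) × (B₁ × B₂)) ℂ) :
    trace1 σ = traceB (σ.submatrix eq1.symm eq1.symm) := by
  ext x y
  simp [trace1, traceB, eq1, Matrix.submatrix, Fintype.sum_prod_type]

lemma trace2_density {A₁ A₂ B₁ B₂ : Type} [Fintype A₁] [Fintype B₁] [Fintype A₂] [Fintype B₂]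
    [DecidableEq A₁] [DecidableEq B₁] [DecidableEq A₂] [DecidableEq B₂]
    {σ : Matrix ((A₁ × A₂) × (B₁ × B₂)) ((A₁ × A₂) × (B₁ × B₂)) ℂ}
    (hσ : IsDensityMatrix σ) : IsDensityMatrix (trace2 σ) := by
  rw [trace2_eq_traceB]
  constructor
  · exact traceB_posSemidef (hσ.1.submatrix _)
  · rw [traceB_trace, ← hσ.2, Matrix.trace, Matrix.trace]
    exact Equiv.sum_comp eq2.symm (fun j => σ.diag j)

lemma trace1_density {A₁ A₂ B₁ B₂ : Type} [Fintype A₁] [Fintype B₁] [Fintype A₂] [Fintype B₂]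
    [DecidableEq A₁] [DecidableEq B₁] [DecidableEq A₂] [DecidableEq B₂]
    {σ : Matrix ((A₁ × A₂) × (B₁ × B₂)) ((A₁ × A₂) × (B₁ × B₂)) ℂ}
    (hσ : IsDensityMatrix σ) : IsDensityMatrix (trace1 σ) := by
  rw [trace1_eq_traceB]
  constructor
  · exact traceB_posSemidef (hσ.1.submatrix _)
  · rw [traceB_trace, ← hσ.2, Matrix.trace, Matrix.trace]
    exact Equiv.sum_comp eq1.symm (fun j => σ.diag j)

/-- The set whose infimum is `entF`. -/
def entFSet {A B : Type} [Fintype A] [DecidableEq A] [Fintype B] [DecidableEq B]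
    (σ : Matrix (A × B) (A × B) ℂ) : Set ℝ :=
  { x | ∃ (n : ℕ) (p : Fin n → ℝ) (v : Fin n → A × B → ℂ),
    (∀ i, 0 ≤ p i) ∧ (∀ i, IsUnitVec (v i)) ∧
    (∑ i, (p i : ℂ) • outer (v i)) = σ ∧
    x = ∑ i, p i * vNEntropy (traceB (outer (v i))) }

lemma entF_eq_sInf {A B : Type} [Fintype A] [DecidableEq A] [Fintype B] [DecidableEq B]
    (σ : Matrix (A × B) (A × B) ℂ) : entF σ = sInf (entFSet σ) := rfl

lemma entFSet_nonneg {A B : Type} [Fintype A] [DecidableEq A] [Fintype B] [DecidableEq B]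
    {σ : Matrix (A × B) (A × B) ℂ} {x : ℝ} (hx : x ∈ entFSet σ) : 0 ≤ x := by
  obtain ⟨n, p, v, hp, hv, -, rfl⟩ := hx
  apply Finset.sum_nonneg
  intro i _
  exact mul_nonneg (hp i) (vNEntropy_nonneg (traceB_density (outer_density (hv i))))

lemma entFSet_bddBelow {A B : Type} [Fintype A] [DecidableEq A] [Fintype B] [DecidableEq B]
    (σ : Matrix (A × B) (A × B) ℂ) : BddBelow (entFSet σ) :=
  ⟨0, fun _ hx => entFSet_nonneg hx⟩

lemma entFSet_nonempty {A B : Type} [Fintype A] [DecidableEq A] [Fintype B] [DecidableEq B]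
    {σ : Matrix (A × B) (A × B) ℂ} (hσ : σ.PosSemidef) : (entFSet σ).Nonempty := by
  obtain ⟨m, p, v, hp, hv, hsum⟩ := exists_decomp hσ
  exact ⟨_, m, p, v, hp, hv, hsum, rfl⟩

lemma entF_le_of_mem {A B : Type} [Fintype A] [DecidableEq A] [Fintype B] [DecidableEq B]
    {σ : Matrix (A × B) (A × B) ℂ} {x : ℝ} (hx : x ∈ entFSet σ) : entF σ ≤ x :=
  csInf_le (entFSet_bddBelow σ) hx

lemma entF_pure_le {A B : Type} [Fintype A] [DecidableEq A] [Fintype B] [DecidableEq B]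
    {v : A × B → ℂ} (hv : IsUnitVec v) : entF (outer v) ≤ vNEntropy (traceB (outer v)) := by
  have hmem : (∑ i : Fin 1, (1 : ℝ) * vNEntropy (traceB (outer v))) ∈ entFSet (outer v) := by
    refine ⟨1, fun _ => 1, fun _ => v, fun _ => zero_le_one, fun _ => hv, ?_, rfl⟩
    simp
  simpa using entF_le_of_mem hmem

lemma entF_convex {A B : Type} [Fintype A] [DecidableEq A] [Fintype B] [DecidableEq B]
    {n : ℕ} (p : Fin n → ℝ) (τ : Fin n → Matrix (A × B) (A × B) ℂ)
    (hp : ∀ i, 0 ≤ p i) (hτ : ∀ i, IsDensityMatrix (τ i)) :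
    entF (∑ i, (p i : ℂ) • τ i) ≤ ∑ i, p i * entF (τ i) := by
  apply le_of_forall_pos_le_add
  intro ε hε
  set T : ℝ := ∑ i, p i with hT
  have hT0 : 0 ≤ T := Finset.sum_nonneg fun i _ => hp i
  set ε' : ℝ := ε / (T + 1) with hε'def
  have hε' : 0 < ε' := div_pos hε (by linarith)
  have hch : ∀ i, ∃ x ∈ entFSet (τ i), x < entF (τ i) + ε' :=
    fun i => exists_lt_of_csInf_lt (entFSet_nonempty (hτ i).1)
      (lt_add_of_pos_right _ hε')
  choose x hx hxlt using hch
  have hx' : ∀ i, ∃ (m : ℕ) (q : Fin m → ℝ) (w : Fin m → A × B → ℂ),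
      (∀ j, 0 ≤ q j) ∧ (∀ j, IsUnitVec (w j)) ∧
      (∑ j, (q j : ℂ) • outer (w j)) = τ i ∧
      x i = ∑ j, q j * vNEntropy (traceB (outer (w j))) := fun i => hx i
  choose m q w hq hw hsum hval using hx'
  set κ := (Σ i : Fin n, Fin (m i)) with hκ
  set e : Fin (Fintype.card κ) ≃ κ := (Fintype.equivFin κ).symm with he
  have hmem : (∑ i, p i * x i) ∈ entFSet (∑ i, (p i : ℂ) • τ i) := by
    refine ⟨Fintype.card κ, fun k => p (e k).1 * q (e k).1 (e k).2,
      fun k => w (e k).1 (e k).2,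
      fun k => mul_nonneg (hp _) (hq _ _), fun k => hw _ _, ?_, ?_⟩
    · refine Eq.trans (Equiv.sum_comp e
        (fun s : κ => ((p s.1 * q s.1 s.2 : ℝ) : ℂ) • outer (w s.1 s.2))) ?_
      rw [← Finset.univ_sigma_univ, Finset.sum_sigma]
      apply Finset.sum_congr rfl; intro i _
      rw [← hsum i, Finset.smul_sum]
      apply Finset.sum_congr rfl; intro j _
      push_cast
      rw [mul_smul]
    · refine Eq.trans ?_ (Equiv.sum_comp e
        (fun s : κ => p s.1 * q s.1 s.2 * vNEntropy (traceB (outer (w s.1 s.2))))).symm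
      rw [← Finset.univ_sigma_univ, Finset.sum_sigma]
      symm
      apply Finset.sum_congr rfl; intro i _
      symm
      rw [hval i, Finset.mul_sum]
      apply Finset.sum_congr rfl; intro j _
      ring
  refine le_trans (entF_le_of_mem hmem) ?_
  have h1 : ∑ i, p i * x i ≤ ∑ i, p i * (entF (τ i) + ε') :=
    Finset.sum_le_sum fun i _ =>
      mul_le_mul_of_nonneg_left (le_of_lt (hxlt i)) (hp i)
  have h2 : ∑ i, p i * (entF (τ i) + ε') = (∑ i, p i * entF (τ i)) + T * ε' := by
    rw [hT, Finset.sum_mul, ← Finset.sum_add_distrib]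
    apply Finset.sum_congr rfl; intro i _
    ring
  have he : (T + 1) * ε' = ε := by
    rw [hε'def]
    field_simp
  have he2 : T * ε' + ε' = ε := by rw [← he]; ring
  have h3 : T * ε' ≤ ε := by nlinarith [hε'.le]
  linarith

lemma trace2_linear {A₁ A₂ B₁ B₂ : Type} [Fintype A₁] [Fintype B₁] [Fintype A₂] [Fintype B₂]
    {n : ℕ} (c : Fin n → ℂ)
    (M : Fin n → Matrix ((A₁ × A₂) × (B₁ × B₂)) ((A₁ × A₂) × (B₁ × B₂)) ℂ) :
    trace2 (∑ i, c i • M i) = ∑ i, c i • trace2 (M i) := by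
  ext x y
  simp only [trace2, Matrix.sum_apply, Matrix.smul_apply, Matrix.of_apply, smul_eq_mul,
    Finset.mul_sum]
  conv_lhs =>
    enter [2, a₂]
    rw [Finset.sum_comm]
  rw [Finset.sum_comm]

lemma trace1_linear {A₁ A₂ B₁ B₂ : Type} [Fintype A₁] [Fintype B₁] [Fintype A₂] [Fintype B₂]
    {n : ℕ} (c : Fin n → ℂ)
    (M : Fin n → Matrix ((A₁ × A₂) × (B₁ × B₂)) ((A₁ × A₂) × (B₁ × B₂)) ℂ) :
    trace1 (∑ i, c i • M i) = ∑ i, c i • trace1 (M i) := by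
  ext x y
  simp only [trace1, Matrix.sum_apply, Matrix.smul_apply, Matrix.of_apply, smul_eq_mul,
    Finset.mul_sum]
  conv_lhs =>
    enter [2, a₂]
    rw [Finset.sum_comm]
  rw [Finset.sum_comm]


/-- Reduction of strong superadditivity of `E_F` to pure states: if strong
superadditivity holds for all quadripartite pure states, it holds for all quadripartite
density matrices. -/
theorem strong_superadditivity_reduces_to_pure_states {a₁ a₂ b₁ b₂ : ℕ}
    (h : ∀ φ : (Fin a₁ × Fin a₂) × (Fin b₁ × Fin b₂) → ℂ, IsUnitVec φ →
      entF (outer φ) ≥ entF (trace2 (outer φ)) + entF (trace1 (outer φ))) :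
    ∀ σ : Matrix ((Fin a₁ × Fin a₂) × (Fin b₁ × Fin b₂))
        ((Fin a₁ × Fin a₂) × (Fin b₁ × Fin b₂)) ℂ,
      IsDensityMatrix σ → entF σ ≥ entF (trace2 σ) + entF (trace1 σ) := by
  intro σ hσ
  have hne : (entFSet σ).Nonempty := entFSet_nonempty hσ.1
  rw [ge_iff_le, entF_eq_sInf]
  apply le_csInf hne
  rintro x ⟨n, p, v, hp, hv, hsum, rfl⟩
  have hvd : ∀ i, IsDensityMatrix (outer (v i)) := fun i => outer_density (hv i)
  have conv2 : entF (trace2 σ) ≤ ∑ i, p i * entF (trace2 (outer (v i))) := by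
    have : trace2 σ = ∑ i, (p i : ℂ) • trace2 (outer (v i)) := by
      rw [← hsum, trace2_linear]
    rw [this]
    exact entF_convex p _ hp (fun i => trace2_density (hvd i))
  have conv1 : entF (trace1 σ) ≤ ∑ i, p i * entF (trace1 (outer (v i))) := by
    have : trace1 σ = ∑ i, (p i : ℂ) • trace1 (outer (v i)) := by
      rw [← hsum, trace1_linear]
    rw [this]
    exact entF_convex p _ hp (fun i => trace1_density (hvd i))
  calc entF (trace2 σ) + entF (trace1 σ)
      ≤ (∑ i, p i * entF (trace2 (outer (v i)))) +
        ∑ i, p i * entF (trace1 (outer (v i))) := add_le_add conv2 conv1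
    _ = ∑ i, p i * (entF (trace2 (outer (v i))) + entF (trace1 (outer (v i)))) := by
        rw [← Finset.sum_add_distrib]
        exact Finset.sum_congr rfl fun i _ => (mul_add _ _ _).symm
    _ ≤ ∑ i, p i * entF (outer (v i)) :=
        Finset.sum_le_sum fun i _ => mul_le_mul_of_nonneg_left (h (v i) (hv i)) (hp i)
    _ ≤ ∑ i, p i * vNEntropy (traceB (outer (v i))) :=
        Finset.sum_le_sum fun i _ => mul_le_mul_of_nonneg_left (entF_pure_le (hv i)) (hp i)

end
end
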